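/- Let γ ∈ (0,1), R_max > 0, ε > 0, and p = (1-γ)²ε/(R_max − ε(1-γ)γ), assuming ε(1-γ) < R_max so that p > 0. Suppose a sequence (L_t) of nonnegative reals satisfies L_t ≤ p·R_max/(1-γ) + (1-p)·γ·L_{t+1} for all t, and L_t ≤ R_max/(1-γ) for all t. Then L_0 ≤ ε. -/

import Mathlib

/-- if the loss sequence (L t) satisfies
L t ≤ p·R_max/(1-γ) + (1-p)·γ·L (t+1) and L t ≤ R_max/(1-γ), where
p = (1-γ)²ε/(R_max − ε(1-γ)γ) > 0, then L 0 ≤ ε. -/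
theorem loss_recursion_bound (γ Rmax ε p : ℝ) (hγ0 : 0 < γ) (hγ1 : γ < 1)
    (hR : 0 < Rmax) (hε : 0 < ε) (hεR : ε * (1 - γ) < Rmax)
    (hp : p = (1 - γ) ^ 2 * ε / (Rmax - ε * (1 - γ) * γ))
    (L : ℕ → ℝ) (hL0 : ∀ t, 0 ≤ L t)
    (hLrec : ∀ t, L t ≤ p * (Rmax / (1 - γ)) + (1 - p) * γ * L (t + 1))
    (hLub : ∀ t, L t ≤ Rmax / (1 - γ)) :
    L 0 ≤ ε := by
  have hγ' : (0:ℝ) < 1 - γ := by linarith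
  have hD : 0 < Rmax - ε * (1 - γ) * γ := by nlinarith
  have hp0 : 0 < p := by
    rw [hp]; positivity
  have hp1 : p < 1 := by
    rw [hp, div_lt_one hD]; nlinarith
  set q := (1 - p) * γ with hq
  have hq0 : 0 ≤ q := by nlinarith
  have hq1 : q < 1 := by nlinarith
  have hfix : p * (Rmax / (1 - γ)) + q * ε = ε := by
    rw [hq, hp]
    field_simp [show Rmax - γ * (1 - γ) * ε ≠ 0 by nlinarith]
    ring
  have key : ∀ t, L t - ε ≤ q * (L (t + 1) - ε) := by
    intro t
    have := hLrec t
    have heq : (p * (Rmax / (1 - γ)) + q * ε) + q * (L (t+1) - ε)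
        = p * (Rmax / (1 - γ)) + q * L (t + 1) := by ring
    have : L t ≤ (p * (Rmax / (1 - γ)) + q * ε) + q * (L (t+1) - ε) := by
      rw [heq]; exact hLrec t
    rw [hfix] at this
    linarith
  have hiter : ∀ n, L 0 - ε ≤ q ^ n * (L n - ε) := by
    intro n
    induction n with
    | zero => simp
    | succ n ih =>
      calc L 0 - ε ≤ q ^ n * (L n - ε) := ih
        _ ≤ q ^ n * (q * (L (n+1) - ε)) := by
            exact mul_le_mul_of_nonneg_left (key n) (pow_nonneg hq0 n)
        _ = q ^ (n+1) * (L (n+1) - ε) := by ring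
  have hbound : ∀ n, L 0 - ε ≤ q ^ n * (Rmax / (1 - γ)) := by
    intro n
    refine le_trans (hiter n) ?_
    have : L n - ε ≤ Rmax / (1 - γ) := by
      have := hLub n; linarith
    nlinarith [pow_nonneg hq0 n]
  have htend : Filter.Tendsto (fun n => q ^ n * (Rmax / (1 - γ))) Filter.atTop (nhds 0) := by
    have := (tendsto_pow_atTop_nhds_zero_of_lt_one hq0 hq1).mul_const (Rmax / (1 - γ))
    simpa using this
  have := ge_of_tendsto htend (Filter.Eventually.of_forall hbound)
  linarith
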